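/- Let f, g ∈ A be nonzero, with f depending only on the variables u and u_{10} and g depending only on u and u_{01}. Consider the master-formula λ-bracket with generator coefficients P_{(1,0)} = f, P_{(0,1)} = g, P_{(−1,0)} = −S₁^{−1}(f), P_{(0,−1)} = −S₂^{−1}(g), and P_T = 0 otherwise. If this λ-bracket satisfies the PVA-Jacobi identity for the triple (u, u, u), then f·S₁^{−1}(∂f/∂u_{10}) = S₁^{−1}(f)·(∂f/∂u) and g·S₂^{−1}(∂g/∂u_{01}) = S₂^{−1}(g)·(∂g/∂u). -/
import Mathlib


open MvPolynomial

namespace MPVA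

/-- The algebra of difference polynomials in `ℓ` generators on a `D`-dimensional lattice:
polynomials over `ℂ` in the variables `u^i_N`, `i ∈ Fin ℓ`, `N ∈ ℤ^D`. -/
abbrev A (ℓ D : ℕ) := MvPolynomial (Fin ℓ × (Fin D → ℤ)) ℂ

variable {ℓ D : ℕ}

/-- The shift automorphism `S^M` sending `u^i_N` to `u^i_{N+M}`. -/
noncomputable def Sh (M : Fin D → ℤ) : A ℓ D ≃ₐ[ℂ] A ℓ D :=
  renameEquiv ℂ ((Equiv.refl (Fin ℓ)).prodCongr (Equiv.addRight M))

/-- The `α`-th standard basis vector `E_α ∈ ℤ^D`. -/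
def E (α : Fin D) : Fin D → ℤ := fun β => if β = α then 1 else 0

/-- Coefficient `B_T(f,g)` of `λ^T` in the master-formula λ-bracket `{f_λ g}` determined
by the generator coefficients `{u^i_λ u^j} = Σ_T (P j i T)·λ^T`:
`{f_λ g} = Σ_{i,j,M,N,T'} (∂g/∂u^j_N)·S^N(P^{ji}_{T'})·S^{N+T'−M}(∂f/∂u^i_M)·λ^{N+T'−M}`. -/
noncomputable def B (P : Fin ℓ → Fin ℓ → (Fin D → ℤ) → A ℓ D)
    (T : Fin D → ℤ) (f g : A ℓ D) : A ℓ D :=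
  ∑ᶠ (i : Fin ℓ) (j : Fin ℓ) (M : Fin D → ℤ) (N : Fin D → ℤ),
    (pderiv (j, N) g) * (Sh N (P j i (T - N + M))) * (Sh T (pderiv (i, M) f))

/-- The family of generator coefficients has only finitely many nonzero members. -/
def FinSupp (P : Fin ℓ → Fin ℓ → (Fin D → ℤ) → A ℓ D) : Prop :=
  {x : (Fin ℓ × Fin ℓ) × (Fin D → ℤ) | P x.1.1 x.1.2 x.2 ≠ 0}.Finite

/-- The PVA-Jacobi identity for the triple `(f,g,h)`, written coefficient-wise
(for all `T, U ∈ ℤ^D`, the coefficient of `λ^T μ^U` in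
`Σ_U {f_λ B_U(g,h)}μ^U − Σ_T {g_μ B_T(f,h)}λ^T = Σ_{T,U} B_U(B_T(f,g),h)λ^{T+U}μ^U`). -/
def Jacobi (P : Fin ℓ → Fin ℓ → (Fin D → ℤ) → A ℓ D) (f g h : A ℓ D) : Prop :=
  ∀ T U : Fin D → ℤ,
    B P T f (B P U g h) - B P U g (B P T f h) = B P U (B P (T - U) f g) h

/-- For `D = 2`: the lattice point `(m,n) ∈ ℤ²`. -/
def v (m n : ℤ) : Fin 2 → ℤ := ![m, n]

/-- For `D = 2`, `ℓ = 1`: the variable `u_{mn}` of the scalar two-dimensional algebra. -/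
noncomputable def uu (m n : ℤ) : A 1 2 := X ((0 : Fin 1), v m n)

/-- Generator coefficients of the scalar two-dimensional first-order operator
`P = f·S₁ + g·S₂ − S₂^{−1}∘g − S₁^{−1}∘f`. -/
noncomputable def P1 (f g : A 1 2) : Fin 1 → Fin 1 → (Fin 2 → ℤ) → A 1 2 :=
  fun _ _ T =>
    if T = v 1 0 then f
    else if T = v 0 1 then g
    else if T = v (-1) 0 then -(Sh (v (-1) 0) f)
    else if T = v 0 (-1) then -(Sh (v 0 (-1)) g)
    else 0


section Helpers

lemma Sh_Sh (M N : Fin D → ℤ) (x : A ℓ D) : Sh M (Sh N x) = Sh (N + M) x := by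
  simp only [Sh, renameEquiv_apply, rename_rename]
  have : (⇑((Equiv.refl (Fin ℓ)).prodCongr (Equiv.addRight M)) ∘
      ⇑((Equiv.refl (Fin ℓ)).prodCongr (Equiv.addRight N))) =
      ⇑((Equiv.refl (Fin ℓ)).prodCongr (Equiv.addRight (N + M))) := by
    funext p
    cases p
    simp [add_assoc]
  rw [this]

lemma Sh_zero (x : A ℓ D) : Sh (0 : Fin D → ℤ) x = x := by
  have : ((Equiv.refl (Fin ℓ)).prodCongr (Equiv.addRight (0 : Fin D → ℤ))) = Equiv.refl _ := by
    ext p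
    · simp
    · simp
  simp [Sh, this]

lemma v00 : v 0 0 = 0 := by
  funext i; fin_cases i <;> rfl

lemma v_eta (N : Fin 2 → ℤ) : N = v (N 0) (N 1) := by
  funext i; fin_cases i <;> rfl

lemma v_inj {a b c d : ℤ} : v a b = v c d ↔ a = c ∧ b = d := by
  constructor
  · intro h
    exact ⟨congrFun h 0, congrFun h 1⟩
  · rintro ⟨rfl, rfl⟩; rfl

lemma v_add (a b c d : ℤ) : v a b + v c d = v (a+c) (b+d) := by
  funext i; fin_cases i <;> simp [v]

lemma v_sub (a b c d : ℤ) : v a b - v c d = v (a-c) (b-d) := by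
  funext i; fin_cases i <;> simp [v]

lemma pd_uu (N : Fin 2 → ℤ) :
    pderiv ((0 : Fin 1), N) (uu 0 0) = if N = v 0 0 then 1 else 0 := by
  classical
  rw [uu, pderiv_X]
  by_cases h : N = v 0 0
  · subst h; simp
  · rw [if_neg h, Pi.single_apply, if_neg]
    intro hh
    exact h (congrArg Prod.snd hh).symm

lemma B_left (P : Fin 1 → Fin 1 → (Fin 2 → ℤ) → A 1 2) (T : Fin 2 → ℤ) (h : A 1 2) :
    B P T (uu 0 0) h = ∑ᶠ N, pderiv ((0 : Fin 1), N) h * Sh N (P 0 0 (T - N)) := by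
  rw [B, finsum_unique, finsum_unique]
  simp only [show (default : Fin 1) = 0 from rfl]
  rw [finsum_eq_single _ (0 : Fin 2 → ℤ)]
  · refine finsum_congr fun N => ?_
    rw [pd_uu, v00, if_pos rfl, map_one, mul_one, add_zero]
  · intro M hM
    have : pderiv ((0 : Fin 1), M) (uu 0 0) = 0 := by
      rw [pd_uu, v00, if_neg hM]
    rw [this]
    simp

lemma B_right (P : Fin 1 → Fin 1 → (Fin 2 → ℤ) → A 1 2) (T : Fin 2 → ℤ) (q : A 1 2) :
    B P T q (uu 0 0) = ∑ᶠ M, P 0 0 (T + M) * Sh T (pderiv ((0 : Fin 1), M) q) := by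
  rw [B, finsum_unique, finsum_unique]
  simp only [show (default : Fin 1) = 0 from rfl]
  refine finsum_congr fun M => ?_
  rw [finsum_eq_single _ (0 : Fin 2 → ℤ)]
  · rw [pd_uu, v00, if_pos rfl, one_mul, Sh_zero, sub_zero]
  · intro N hN
    have : pderiv ((0 : Fin 1), N) (uu 0 0) = 0 := by
      rw [pd_uu, v00, if_neg hN]
    rw [this, zero_mul, zero_mul]

lemma B_uu (P : Fin 1 → Fin 1 → (Fin 2 → ℤ) → A 1 2) (T : Fin 2 → ℤ) :
    B P T (uu 0 0) (uu 0 0) = P 0 0 T := by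
  rw [B_left, finsum_eq_single _ (0 : Fin 2 → ℤ)]
  · rw [pd_uu, v00, if_pos rfl, one_mul, Sh_zero, sub_zero]
  · intro N hN
    rw [pd_uu, v00, if_neg hN, zero_mul]

lemma B_left_zero (P : Fin 1 → Fin 1 → (Fin 2 → ℤ) → A 1 2) (T : Fin 2 → ℤ) :
    B P T (uu 0 0) 0 = 0 := by
  rw [B_left]
  simp

lemma P1_10 (f g : A 1 2) : P1 f g 0 0 (v 1 0) = f := by
  norm_num [P1, v_inj]

lemma P1_01 (f g : A 1 2) : P1 f g 0 0 (v 0 1) = g := by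
  norm_num [P1, v_inj]

lemma P1_20 (f g : A 1 2) : P1 f g 0 0 (v 2 0) = 0 := by
  norm_num [P1, v_inj]

lemma P1_02 (f g : A 1 2) : P1 f g 0 0 (v 0 2) = 0 := by
  norm_num [P1, v_inj]

end Helpers

/-- if `f = f(u,u_{10})`, `g = g(u,u_{01})` are nonzero and the λ-bracket of
the first-order operator satisfies the PVA-Jacobi identity for `(u,u,u)`, then
`f·S₁^{−1}(∂f/∂u_{10}) = S₁^{−1}(f)·(∂f/∂u)` and
`g·S₂^{−1}(∂g/∂u_{01}) = S₂^{−1}(g)·(∂g/∂u)`. -/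
theorem first_order_functional_equation (f g : A 1 2) (hf : f ≠ 0) (hg : g ≠ 0)
    (hfdep : ∀ m n : ℤ, ¬(m = 0 ∧ n = 0) → ¬(m = 1 ∧ n = 0) →
      pderiv ((0 : Fin 1), v m n) f = 0)
    (hgdep : ∀ m n : ℤ, ¬(m = 0 ∧ n = 0) → ¬(m = 0 ∧ n = 1) →
      pderiv ((0 : Fin 1), v m n) g = 0)
    (hJ : Jacobi (P1 f g) (uu 0 0) (uu 0 0) (uu 0 0)) :
    f * Sh (v (-1) 0) (pderiv ((0 : Fin 1), v 1 0) f) =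
      Sh (v (-1) 0) f * pderiv ((0 : Fin 1), v 0 0) f ∧
    g * Sh (v 0 (-1)) (pderiv ((0 : Fin 1), v 0 1) g) =
      Sh (v 0 (-1)) g * pderiv ((0 : Fin 1), v 0 0) g := by
  constructor
  · -- the f-equation, from Jacobi at T = (2,0), U = (1,0)
    have hJf := hJ (v 2 0) (v 1 0)
    rw [B_uu, B_uu, B_uu] at hJf
    rw [show v 2 0 - v 1 0 = v 1 0 by rw [v_sub]; norm_num] at hJf
    rw [P1_10, P1_20, B_left_zero, sub_zero, B_left, B_right] at hJf
    rw [finsum_eq_single _ (v 1 0)] at hJf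
    · rw [finsum_eq_single _ (v 0 0)] at hJf
      · rw [show v 1 0 + v 0 0 = v 1 0 by rw [v_add]; norm_num,
          show v 2 0 - v 1 0 = v 1 0 by rw [v_sub]; norm_num, P1_10] at hJf
        -- hJf : pderiv (0, v 1 0) f * Sh (v 1 0) f = f * Sh (v 1 0) (pderiv (0, v 0 0) f)
        have h2 := congrArg (Sh (v (-1) 0)) hJf
        rw [map_mul, map_mul, Sh_Sh, Sh_Sh,
          show v 1 0 + v (-1) 0 = 0 by funext i; fin_cases i <;> norm_num [v],
          Sh_zero, Sh_zero] at h2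
        rw [mul_comm]
        exact h2
      · intro M hM
        by_cases h1 : M = v 1 0
        · subst h1
          rw [show v 1 0 + v 1 0 = v 2 0 by rw [v_add]; norm_num, P1_20, zero_mul]
        · have : pderiv ((0 : Fin 1), M) f = 0 := by
            rw [v_eta M]
            refine hfdep (M 0) (M 1) ?_ ?_
            · rintro ⟨h0, h1'⟩
              exact hM ((v_eta M).trans (by rw [h0, h1', v00]))
            · rintro ⟨h0, h1'⟩
              exact h1 ((v_eta M).trans (by rw [h0, h1']))
          rw [this, map_zero, mul_zero]
    · intro N hN
      by_cases h1 : N = v 0 0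
      · subst h1
        rw [show v 2 0 - v 0 0 = v 2 0 by rw [v_sub]; norm_num, P1_20, map_zero, mul_zero]
      · have : pderiv ((0 : Fin 1), N) f = 0 := by
          rw [v_eta N]
          refine hfdep (N 0) (N 1) ?_ ?_
          · rintro ⟨h0, h1'⟩
            exact h1 ((v_eta N).trans (by rw [h0, h1']))
          · rintro ⟨h0, h1'⟩
            exact hN ((v_eta N).trans (by rw [h0, h1']))
        rw [this, zero_mul]
  · -- the g-equation, from Jacobi at T = (0,2), U = (0,1)
    have hJg := hJ (v 0 2) (v 0 1)
    rw [B_uu, B_uu, B_uu] at hJg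
    rw [show v 0 2 - v 0 1 = v 0 1 by rw [v_sub]; norm_num] at hJg
    rw [P1_01, P1_02, B_left_zero, sub_zero, B_left, B_right] at hJg
    rw [finsum_eq_single _ (v 0 1)] at hJg
    · rw [finsum_eq_single _ (v 0 0)] at hJg
      · rw [show v 0 1 + v 0 0 = v 0 1 by rw [v_add]; norm_num,
          show v 0 2 - v 0 1 = v 0 1 by rw [v_sub]; norm_num, P1_01] at hJg
        have h2 := congrArg (Sh (v 0 (-1))) hJg
        rw [map_mul, map_mul, Sh_Sh, Sh_Sh,
          show v 0 1 + v 0 (-1) = 0 by funext i; fin_cases i <;> norm_num [v],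
          Sh_zero, Sh_zero] at h2
        rw [mul_comm]
        exact h2
      · intro M hM
        by_cases h1 : M = v 0 1
        · subst h1
          rw [show v 0 1 + v 0 1 = v 0 2 by rw [v_add]; norm_num, P1_02, zero_mul]
        · have : pderiv ((0 : Fin 1), M) g = 0 := by
            rw [v_eta M]
            refine hgdep (M 0) (M 1) ?_ ?_
            · rintro ⟨h0, h1'⟩
              exact hM ((v_eta M).trans (by rw [h0, h1', v00]))
            · rintro ⟨h0, h1'⟩
              exact h1 ((v_eta M).trans (by rw [h0, h1']))
          rw [this, map_zero, mul_zero]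
    · intro N hN
      by_cases h1 : N = v 0 0
      · subst h1
        rw [show v 0 2 - v 0 0 = v 0 2 by rw [v_sub]; norm_num, P1_02, map_zero, mul_zero]
      · have : pderiv ((0 : Fin 1), N) g = 0 := by
          rw [v_eta N]
          refine hgdep (N 0) (N 1) ?_ ?_
          · rintro ⟨h0, h1'⟩
            exact h1 ((v_eta N).trans (by rw [h0, h1']))
          · rintro ⟨h0, h1'⟩
            exact hN ((v_eta N).trans (by rw [h0, h1']))
        rw [this, zero_mul]

end MPVA
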